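/- For every n ≥ 2, the quantity binom(n-1, 2) - ∑_{k≥1} binom(⌊(n-2)/2^k⌋ + 1, 2) equals ∑_{k=1}^{n-2} op(k), where op(k) is the largest odd divisor of k. -/

import Mathlib

open Finset

private lemma geom2 (v : ℕ) : ∑ k ∈ Finset.range v, (2:ℤ)^k = 2^v - 1 := by
  induction v with
  | zero => simp
  | succ v ih => rw [Finset.sum_range_succ, ih]; ring

private lemma sum_div_pow (m N : ℕ) (hm : 1 ≤ m) (hN : m < 2^N) :
    ∑ k ∈ Finset.range N, (if 2^(k+1) ∣ m then ((m / 2^(k+1) : ℕ) : ℤ) else 0)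
      = (m : ℤ) - (ordCompl[2] m : ℤ) := by
  have hm0 : m ≠ 0 := by omega
  set v := m.factorization 2 with hv
  have hdvd_iff : ∀ k : ℕ, 2^(k+1) ∣ m ↔ k < v := by
    intro k
    rw [Nat.Prime.pow_dvd_iff_le_factorization Nat.prime_two hm0]
    omega
  have hvN : v ≤ N := by
    have h1 : 2^v ≤ m := Nat.ordProj_le 2 hm0
    have : (2:ℕ)^v < 2^N := lt_of_le_of_lt h1 hN
    exact le_of_lt ((Nat.pow_lt_pow_iff_right (by norm_num)).mp this)
  obtain ⟨c, hc⟩ : ∃ c : ℕ, m = 2^v * c :=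
    ⟨ordCompl[2] m, (Nat.ordProj_mul_ordCompl_eq_self m 2).symm⟩
  have hmz : (m : ℤ) = 2^v * (c : ℤ) := by exact_mod_cast congrArg (Nat.cast (R := ℤ)) hc
  have hoc : (m : ℤ) / 2^v = (c : ℤ) := by
    rw [hmz, Int.mul_ediv_cancel_left _ (by positivity)]
  rw [hoc]
  have hsum : ∑ k ∈ Finset.range N, (if 2^(k+1) ∣ m then ((m / 2^(k+1) : ℕ) : ℤ) else 0)
      = ∑ k ∈ Finset.range v, ((m / 2^(k+1) : ℕ) : ℤ) := by
    rw [← Finset.sum_subset (Finset.range_subset_range.mpr hvN)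
      (fun k _ hk => by
        rw [Finset.mem_range, not_lt] at hk
        simp [if_neg (fun h => by have := (hdvd_iff k).mp h; omega)])]
    exact Finset.sum_congr rfl (fun k hk => by
      rw [Finset.mem_range] at hk
      simp [if_pos ((hdvd_iff k).mpr hk)])
  rw [hsum]
  have hdiv : ∀ k ∈ Finset.range v, ((m / 2^(k+1) : ℕ) : ℤ) = ((2^(v-1-k) * c : ℕ) : ℤ) := by
    intro k hk
    rw [Finset.mem_range] at hk
    congr 1
    have hpow : (2:ℕ)^v = 2^(k+1) * 2^(v-1-k) := by
      rw [← pow_add]; congr 1; omega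
    rw [hc, hpow, mul_assoc, Nat.mul_div_cancel_left _ (by positivity)]
  rw [Finset.sum_congr rfl hdiv]
  have hre : ∑ k ∈ Finset.range v, ((2^(v-1-k) * c : ℕ) : ℤ)
      = ∑ k ∈ Finset.range v, ((2^k * c : ℕ) : ℤ) :=
    Finset.sum_range_reflect (fun k => ((2^k * c : ℕ) : ℤ)) v
  rw [hre]
  push_cast
  rw [← Finset.sum_mul, geom2, hmz]
  ring

private lemma step_lemma (m N : ℕ) (hm : 1 ≤ m) (hN : m < 2^N) :
    ∑ k ∈ Finset.range N, ((m / 2^(k+1) + 1).choose 2 : ℤ)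
      = ∑ k ∈ Finset.range N, (((m-1) / 2^(k+1) + 1).choose 2 : ℤ)
        + ((m : ℤ) - (ordCompl[2] m : ℤ)) := by
  rw [← sum_div_pow m N hm hN, ← Finset.sum_add_distrib]
  refine Finset.sum_congr rfl (fun k _ => ?_)
  set d := 2^(k+1) with hd
  have hm1 : m - 1 + 1 = m := by omega
  have hsd : m / d = (m-1)/d + if d ∣ m then 1 else 0 := by
    conv_lhs => rw [← hm1]
    rw [Nat.succ_div, hm1]
  by_cases h : d ∣ m
  · rw [if_pos h, hsd, if_pos h]
    have : ((m-1)/d + 1 + 1).choose 2 = ((m-1)/d + 1).choose 2 + ((m-1)/d + 1) := by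
      rw [Nat.choose_succ_succ ((m-1)/d + 1) 1]
      simp [Nat.choose_one_right, Nat.add_comm]
    rw [this]
    push_cast
    ring
  · rw [if_neg h, hsd, if_neg h]
    ring

private lemma main_aux (m : ℕ) :
    ((m + 1).choose 2 : ℤ) - ∑ k ∈ Finset.range (m+1), ((m / 2^(k+1) + 1).choose 2 : ℤ)
      = ∑ k ∈ Finset.Icc 1 m, (ordCompl[2] k : ℤ) := by
  induction m with
  | zero => simp
  | succ m ih =>
    have hlt : m + 1 < 2^(m+2) :=
      lt_of_lt_of_le (m+1).lt_two_pow_self (Nat.pow_le_pow_right (by norm_num) (by omega))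
    have hstep := step_lemma (m+1) (m+2) (by omega) hlt
    have hpad : ∑ k ∈ Finset.range (m+2), (((m+1-1) / 2^(k+1) + 1).choose 2 : ℤ)
        = ∑ k ∈ Finset.range (m+1), ((m / 2^(k+1) + 1).choose 2 : ℤ) := by
      simp only [Nat.add_sub_cancel]
      rw [Finset.sum_range_succ]
      have : m / 2^(m+2) = 0 := Nat.div_eq_of_lt (by omega)
      simp [this]
    rw [hpad] at hstep
    have hch : ((m + 1 + 1).choose 2 : ℤ) = ((m+1).choose 2 : ℤ) + (m + 1 : ℤ) := by
      have : (m + 2).choose 2 = (m+1).choose 1 + (m+1).choose 2 := Nat.choose_succ_succ (m+1) 1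
      push_cast [this, Nat.choose_one_right]
      ring
    rw [Finset.sum_Icc_succ_top (by omega : 1 ≤ m + 1), ← ih, hstep, hch]
    push_cast
    ring

theorem degP_eq_sum_oddPart (n : ℕ) (hn : 2 ≤ n) :
    ((n - 1).choose 2 : ℤ) - ∑ᶠ k : ℕ, (((n - 2) / 2 ^ (k + 1) + 1).choose 2 : ℤ) =
      ∑ k ∈ Finset.Icc 1 (n - 2), (ordCompl[2] k : ℤ) := by
  set m := n - 2 with hm
  have hn1 : n - 1 = m + 1 := by omega
  have hfin : ∑ᶠ k : ℕ, ((m / 2 ^ (k + 1) + 1).choose 2 : ℤ)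
      = ∑ k ∈ Finset.range (m+1), ((m / 2^(k+1) + 1).choose 2 : ℤ) := by
    apply finsum_eq_sum_of_support_subset
    intro k hk
    simp only [Function.mem_support, ne_eq] at hk
    rw [Finset.coe_range, Set.mem_Iio]
    by_contra h
    push_neg at h
    apply hk
    have : m / 2^(k+1) = 0 := Nat.div_eq_of_lt (by
      calc m < 2^m := m.lt_two_pow_self
        _ ≤ 2^(k+1) := Nat.pow_le_pow_right (by norm_num) (by omega))
    simp [this]
  rw [hn1, hfin]
  exact main_aux m
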